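/- Fix k ≥ 1, a partition λ ⊢ n, and a cocharge tableau C of shape λ with D := Dsp^c(C) ⊆ {1,...,n}. Then the map sending a finite subset I ⊆ N of positive integers containing D to the vector h⃗_C^I = (h_r)_{r≥1}, where r_i := |{j ∈ N \ I : j < i}| for i ∈ I and h_r := |{i ∈ I \ D : r_i = r}|, is a bijection between the collection of finite subsets I ⊆ N containing D with |I| = k-1 and the set H_C^k of vectors (h_r)_{r≥1} of non-negative integers with finitely many non-zero entries satisfying Σ_r h_r < k - |D|. -/

import Mathlib

/-- `r_i`: the number of positive integers smaller than `i` that do not belong to `I`. -/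
def rVal (I : Finset ℕ) (i : ℕ) : ℕ := ((Finset.Ico 1 i).filter fun j => j ∉ I).card

/-- The vector `h⃗_C^I`: its `r`-th entry (`r ≥ 1`) is the number of elements
`i ∈ I \ D` with `r_i = r`. -/
def hVec (D I : Finset ℕ) : ℕ → ℕ := fun r =>
  if r = 0 then 0 else ((I \ D).filter fun i => rVal I i = r).card

namespace Stmt10Aux

open Finset

/-- 0-indexed r-value: number of `j < m` not in `I`. -/
def rZ (I : Finset ℕ) (m : ℕ) : ℕ := ((Finset.range m).filter fun j => j ∉ I).card

/-- 0-indexed h-vector. -/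
def hZ (I : Finset ℕ) : ℕ → ℕ := fun r =>
  if r = 0 then 0 else (I.filter fun i => rZ I i = r).card

lemma rZ_mono (I : Finset ℕ) : Monotone (rZ I) := by
  intro a b hab
  apply Finset.card_le_card
  intro x hx
  simp only [mem_filter, mem_range] at hx ⊢
  exact ⟨hx.1.trans_le hab, hx.2⟩

lemma rZ_add (I : Finset ℕ) (m : ℕ) :
    (I.filter fun i => i < m).card + rZ I m = m := by
  have h1 : (I.filter fun i => i < m) = (Finset.range m).filter (fun j => j ∈ I) := by
    ext x
    simp only [mem_filter, mem_range]
    exact and_comm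
  rw [rZ, h1]
  rw [Finset.card_filter_add_card_filter_not]
  exact Finset.card_range m

lemma rZ_congr {I J : Finset ℕ} (m : ℕ) (h : ∀ j, j < m → (j ∈ I ↔ j ∈ J)) :
    rZ I m = rZ J m := by
  unfold rZ
  congr 1
  apply Finset.filter_congr
  intro x hx
  simp only [mem_range] at hx
  simp [h x hx]

lemma rZ_max' {I : Finset ℕ} (hI : I.Nonempty) :
    (I.card - 1) + rZ I (I.max' hI) = I.max' hI := by
  have h1 : I.filter (fun i => i < I.max' hI) = I.erase (I.max' hI) := by
    ext x
    simp only [mem_filter, mem_erase]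
    constructor
    · rintro ⟨hx, hlt⟩; exact ⟨ne_of_lt hlt, hx⟩
    · rintro ⟨hne, hx⟩
      exact ⟨hx, lt_of_le_of_ne (Finset.le_max' I x hx) hne⟩
  have := rZ_add I (I.max' hI)
  rw [h1, Finset.card_erase_of_mem (I.max'_mem hI)] at this
  exact this

lemma hZ_ne_zero_of_mem {I : Finset ℕ} {i : ℕ} (hi : i ∈ I) (hr : rZ I i ≠ 0) :
    hZ I (rZ I i) ≠ 0 := by
  rw [hZ, if_neg hr]
  have : i ∈ I.filter (fun x => rZ I x = rZ I i) := mem_filter.mpr ⟨hi, rfl⟩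
  exact Finset.card_ne_zero_of_mem this

/-- key for injectivity : the r-value of the max is determined by `hZ`. -/
lemma rZ_max'_le {A B : Finset ℕ} (hA : A.Nonempty) (hB : B.Nonempty)
    (hAB : hZ A = hZ B) : rZ A (A.max' hA) ≤ rZ B (B.max' hB) := by
  by_contra hlt
  push_neg at hlt
  have hR1 : rZ A (A.max' hA) ≠ 0 := by omega
  have h1 : hZ A (rZ A (A.max' hA)) ≠ 0 := hZ_ne_zero_of_mem (A.max'_mem hA) hR1
  rw [hAB] at h1
  rw [hZ, if_neg hR1] at h1
  obtain ⟨b, hb⟩ := Finset.card_pos.mp (Nat.pos_of_ne_zero h1)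
  rw [mem_filter] at hb
  have : rZ B b ≤ rZ B (B.max' hB) := rZ_mono B (Finset.le_max' B b hb.1)
  omega

lemma inj0 : ∀ (K : ℕ) (I J : Finset ℕ), I.card = K → J.card = K → hZ I = hZ J → I = J := by
  intro K
  induction K with
  | zero =>
    intro I J hI hJ _
    rw [Finset.card_eq_zero.mp hI, Finset.card_eq_zero.mp hJ]
  | succ K ih =>
    intro I J hI hJ hh
    have hIne : I.Nonempty := Finset.card_pos.mp (by omega)
    have hJne : J.Nonempty := Finset.card_pos.mp (by omega)
    set M := I.max' hIne with hMdef
    set M' := J.max' hJne with hM'def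
    have hrz : rZ I M = rZ J M' :=
      le_antisymm (rZ_max'_le hIne hJne hh) (rZ_max'_le hJne hIne hh.symm)
    have hM : K + rZ I M = M := by
      have := rZ_max' hIne; rw [hI] at this; simpa using this
    have hM' : K + rZ J M' = M' := by
      have := rZ_max' hJne; rw [hJ] at this; simpa using this
    have hMM' : M = M' := by omega
    -- erase the max from both
    have herI : ∀ i, i ≤ M → rZ (I.erase M) i = rZ I i := by
      intro i hi
      apply rZ_congr
      intro j hj
      simp only [Finset.mem_erase]
      have : j ≠ M := by omega
      tauto
    have herJ : ∀ i, i ≤ M' → rZ (J.erase M') i = rZ J i := by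
      intro i hi
      apply rZ_congr
      intro j hj
      simp only [Finset.mem_erase]
      have : j ≠ M' := by omega
      tauto
    have hfilI : ∀ r, (I.erase M).filter (fun i => rZ (I.erase M) i = r)
        = (I.filter fun i => rZ I i = r).erase M := by
      intro r
      ext x
      simp only [mem_filter, mem_erase]
      constructor
      · rintro ⟨⟨hxM, hxI⟩, hr⟩
        refine ⟨hxM, hxI, ?_⟩
        rw [← herI x (Finset.le_max' I x hxI)]
        exact hr
      · rintro ⟨hxM, hxI, hr⟩
        exact ⟨⟨hxM, hxI⟩, by rw [herI x (Finset.le_max' I x hxI)]; exact hr⟩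
    have hfilJ : ∀ r, (J.erase M').filter (fun i => rZ (J.erase M') i = r)
        = (J.filter fun i => rZ J i = r).erase M' := by
      intro r
      ext x
      simp only [mem_filter, mem_erase]
      constructor
      · rintro ⟨⟨hxM, hxI⟩, hr⟩
        refine ⟨hxM, hxI, ?_⟩
        rw [← herJ x (Finset.le_max' J x hxI)]
        exact hr
      · rintro ⟨hxM, hxI, hr⟩
        exact ⟨⟨hxM, hxI⟩, by rw [herJ x (Finset.le_max' J x hxI)]; exact hr⟩
    have hherase : hZ (I.erase M) = hZ (J.erase M') := by
      funext r
      by_cases hr0 : r = 0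
      · simp [hZ, hr0]
      · rw [hZ, if_neg hr0, hZ, if_neg hr0, hfilI, hfilJ,
          Finset.card_erase_eq_ite, Finset.card_erase_eq_ite]
        have hcardeq : (I.filter fun i => rZ I i = r).card
            = (J.filter fun i => rZ J i = r).card := by
          have := congrFun hh r
          rw [hZ, if_neg hr0, hZ, if_neg hr0] at this
          exact this
        have hmemiff : (M ∈ I.filter fun i => rZ I i = r)
            ↔ (M' ∈ J.filter fun i => rZ J i = r) := by
          simp only [mem_filter]
          constructor
          · rintro ⟨_, h2⟩
            exact ⟨J.max'_mem hJne, by rw [← hrz]; exact h2⟩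
          · rintro ⟨_, h2⟩
            exact ⟨I.max'_mem hIne, by rw [hrz]; exact h2⟩
        split_ifs with h1 h2 h2
        · rw [hcardeq]
        · exact absurd (hmemiff.mp h1) h2
        · exact absurd (hmemiff.mpr h2) h1
        · exact hcardeq
    have heq : I.erase M = J.erase M' := by
      apply ih
      · rw [Finset.card_erase_of_mem (I.max'_mem hIne), hI]; omega
      · rw [Finset.card_erase_of_mem (J.max'_mem hJne), hJ]; omega
      · exact hherase
    have : insert M (I.erase M) = insert M' (J.erase M') := by rw [heq, hMM']
    rwa [Finset.insert_erase (I.max'_mem hIne), Finset.insert_erase (J.max'_mem hJne)] at this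

lemma surj0 : ∀ (K : ℕ) (h : ℕ → ℕ) (N : ℕ), h 0 = 0 → (∀ r, N ≤ r → h r = 0) →
    (∑ r ∈ Finset.range N, h r ≤ K) → ∃ I : Finset ℕ, I.card = K ∧ hZ I = h := by
  intro K
  induction K with
  | zero =>
    intro h N h0 hN hs
    refine ⟨∅, rfl, ?_⟩
    funext r
    have hr : h r = 0 := by
      by_cases hrN : r < N
      · have h1 : h r ≤ ∑ r ∈ Finset.range N, h r :=
          Finset.single_le_sum (fun i _ => Nat.zero_le _) (Finset.mem_range.mpr hrN)
        omega
      · exact hN r (by omega)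
    simp [hZ, hr]
  | succ K ih =>
    intro h N h0 hN hs
    by_cases hall : ∀ r, h r = 0
    · refine ⟨Finset.range (K + 1), Finset.card_range _, ?_⟩
      funext r
      rw [hall r]
      by_cases hr0 : r = 0
      · simp [hZ, hr0]
      · rw [hZ, if_neg hr0, Finset.card_eq_zero, Finset.filter_eq_empty_iff]
        intro i hi
        have : rZ (Finset.range (K + 1)) i = 0 := by
          rw [rZ, Finset.card_eq_zero, Finset.filter_eq_empty_iff]
          intro j hj
          simp only [Finset.mem_range] at hi hj ⊢
          simp only [Finset.mem_range, not_not]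
          omega
        omega
    · push_neg at hall
      obtain ⟨r₀, hr₀⟩ := hall
      have hr₀N : r₀ < N := by by_contra hc; exact hr₀ (hN r₀ (by omega))
      have hSne : ((Finset.range N).filter fun r => h r ≠ 0).Nonempty :=
        ⟨r₀, Finset.mem_filter.mpr ⟨Finset.mem_range.mpr hr₀N, hr₀⟩⟩
      set R := ((Finset.range N).filter fun r => h r ≠ 0).max' hSne with hRdef
      have hRmem := Finset.max'_mem _ hSne
      rw [Finset.mem_filter, Finset.mem_range] at hRmem
      have hR0 : h R ≠ 0 := hRmem.2
      have hR1 : 1 ≤ R := by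
        rcases Nat.eq_zero_or_pos R with h' | h'
        · rw [h', h0] at hR0; omega
        · omega
      have hRmax : ∀ r, R < r → h r = 0 := by
        intro r hr
        by_cases hrN : r < N
        · by_contra hc
          have : r ≤ R := Finset.le_max' _ r (Finset.mem_filter.mpr ⟨Finset.mem_range.mpr hrN, hc⟩)
          omega
        · exact hN r (by omega)
      set h' := Function.update h R (h R - 1) with hh'def
      have h'0 : h' 0 = 0 := by
        rw [hh'def, Function.update_of_ne (by omega) _ h]
        exact h0
      have h'N : ∀ r, N ≤ r → h' r = 0 := by
        intro r hr
        rw [hh'def, Function.update_of_ne (by omega) _ h]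
        exact hN r hr
      have h'sum : ∑ r ∈ Finset.range N, h' r ≤ K := by
        have hRrange : R ∈ Finset.range N := Finset.mem_range.mpr hRmem.1
        have e1 : ∑ r ∈ Finset.range N, h' r
            = (h R - 1) + ∑ r ∈ (Finset.range N).erase R, h r := by
          rw [hh'def, ← Finset.add_sum_erase _ _ hRrange]
          congr 1
          · exact Function.update_self R (h R - 1) h
          · apply Finset.sum_congr rfl
            intro x hx
            rw [Finset.mem_erase] at hx
            exact Function.update_of_ne hx.1 _ h
        have e2 : ∑ r ∈ Finset.range N, h r
            = h R + ∑ r ∈ (Finset.range N).erase R, h r :=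
          (Finset.add_sum_erase _ _ hRrange).symm
        omega
      obtain ⟨I₀, hI₀c, hI₀⟩ := ih h' N h'0 h'N h'sum
      set M := R + K with hMdef
      have hbound : ∀ i ∈ I₀, i < M := by
        intro i hi
        have hKpos : 1 ≤ K := by
          have := Finset.card_pos.mpr ⟨i, hi⟩; omega
        have h1 := rZ_add I₀ i
        have h2 : (I₀.filter fun x => x < i).card ≤ K - 1 := by
          have hsub : (I₀.filter fun x => x < i) ⊆ I₀.erase i := by
            intro x hx
            rw [Finset.mem_filter] at hx
            rw [Finset.mem_erase]
            exact ⟨by omega, hx.1⟩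
          have := Finset.card_le_card hsub
          rw [Finset.card_erase_of_mem hi, hI₀c] at this
          exact this
        have h3 : rZ I₀ i ≤ R := by
          by_contra hgt
          push_neg at hgt
          have hne : rZ I₀ i ≠ 0 := by omega
          have := hZ_ne_zero_of_mem hi hne
          rw [hI₀, hh'def, Function.update_of_ne (by omega) _ h] at this
          exact this (hRmax _ hgt)
        omega
      have hMnot : M ∉ I₀ := fun hc => lt_irrefl M (hbound M hc)
      refine ⟨insert M I₀, ?_, ?_⟩
      · rw [Finset.card_insert_of_notMem hMnot, hI₀c]
      · have hrZins : ∀ i, i ≤ M → rZ (insert M I₀) i = rZ I₀ i := by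
          intro i hi
          apply rZ_congr
          intro j hj
          simp only [Finset.mem_insert]
          have : j ≠ M := by omega
          tauto
        have hfilM : (insert M I₀).filter (fun x => x < M) = I₀ := by
          ext x
          simp only [Finset.mem_filter, Finset.mem_insert]
          constructor
          · rintro ⟨hx | hx, hlt⟩
            · omega
            · exact hx
          · intro hx
            exact ⟨Or.inr hx, hbound x hx⟩
        have hrZM : rZ (insert M I₀) M = R := by
          have := rZ_add (insert M I₀) M
          rw [hfilM, hI₀c] at this
          omega
        funext r
        by_cases hr0 : r = 0
        · simp [hZ, hr0, h0]
        · rw [hZ, if_neg hr0]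
          have hI₀r := congrFun hI₀ r
          rw [hZ, if_neg hr0] at hI₀r
          by_cases hrR : r = R
          · have hfil : (insert M I₀).filter (fun i => rZ (insert M I₀) i = r)
                = insert M (I₀.filter fun i => rZ I₀ i = r) := by
              ext x
              simp only [Finset.mem_filter, Finset.mem_insert]
              constructor
              · rintro ⟨hx | hx, hr⟩
                · exact Or.inl hx
                · refine Or.inr ⟨hx, ?_⟩
                  rw [← hrZins x (le_of_lt (hbound x hx))]
                  exact hr
              · rintro (hx | ⟨hx, hr⟩)
                · exact ⟨Or.inl hx, by rw [hx, hrZM, hrR]⟩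
                · exact ⟨Or.inr hx, by rw [hrZins x (le_of_lt (hbound x hx))]; exact hr⟩
            rw [hfil, Finset.card_insert_of_notMem (fun hc => hMnot (Finset.mem_filter.mp hc).1)]
            rw [hI₀r, hrR, hh'def, Function.update_self]
            omega
          · have hfil : (insert M I₀).filter (fun i => rZ (insert M I₀) i = r)
                = I₀.filter fun i => rZ I₀ i = r := by
              ext x
              simp only [Finset.mem_filter, Finset.mem_insert]
              constructor
              · rintro ⟨hx | hx, hr⟩
                · rw [hx, hrZM] at hr; exact absurd hr.symm hrR
                · refine ⟨hx, ?_⟩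
                  rw [← hrZins x (le_of_lt (hbound x hx))]
                  exact hr
              · rintro ⟨hx, hr⟩
                exact ⟨Or.inr hx, by rw [hrZins x (le_of_lt (hbound x hx))]; exact hr⟩
            rw [hfil, hI₀r, hh'def, Function.update_of_ne hrR _ h]


def pp (D : Finset ℕ) (n : ℕ) : Prop := 0 < n ∧ n ∉ D

instance (D : Finset ℕ) : DecidablePred (pp D) := fun n =>
  inferInstanceAs (Decidable (0 < n ∧ n ∉ D))

lemma pp_infinite (D : Finset ℕ) : (setOf (pp D)).Infinite := by
  have h : setOf (pp D) = (↑(insert 0 D) : Set ℕ)ᶜ := by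
    ext n
    simp only [pp, Set.mem_setOf_eq, Set.mem_compl_iff, Finset.coe_insert, Set.mem_insert_iff,
      Finset.mem_coe, not_or, Nat.pos_iff_ne_zero]
    show 0 < n ∧ n ∉ D ↔ _
    rw [Nat.pos_iff_ne_zero]
  rw [h]
  exact Set.Finite.infinite_compl (Finset.finite_toSet _)

lemma rVal_transfer (D I : Finset ℕ) (hDI : D ⊆ I) (hpos : ∀ i ∈ I, 0 < i)
    {i : ℕ} (hi : i ∈ I \ D) :
    rVal I i = rZ ((I \ D).image (Nat.count (pp D))) (Nat.count (pp D) i) := by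
  classical
  have hinf := pp_infinite D
  have hppmem : ∀ x ∈ I \ D, pp D x := by
    intro x hx
    rw [Finset.mem_sdiff] at hx
    exact ⟨hpos x hx.1, hx.2⟩
  have hpi : pp D i := hppmem i hi
  rw [rVal, rZ]
  apply Finset.card_bij (fun j _ => Nat.count (pp D) j)
  · intro j hj
    rw [Finset.mem_filter, Finset.mem_Ico] at hj
    obtain ⟨⟨hj1, hj2⟩, hjI⟩ := hj
    have hpj : pp D j := ⟨hj1, fun hc => hjI (hDI hc)⟩
    rw [Finset.mem_filter, Finset.mem_range]
    refine ⟨Nat.count_strict_mono hpj hj2, ?_⟩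
    intro hc
    rw [Finset.mem_image] at hc
    obtain ⟨x, hx, hcx⟩ := hc
    have hxj := Nat.count_injective (hppmem x hx) hpj hcx
    rw [hxj] at hx
    exact hjI (Finset.mem_sdiff.mp hx).1
  · intro a ha b hb hab
    rw [Finset.mem_filter, Finset.mem_Ico] at ha hb
    exact Nat.count_injective ⟨ha.1.1, fun hc => ha.2 (hDI hc)⟩
      ⟨hb.1.1, fun hc => hb.2 (hDI hc)⟩ hab
  · intro b hb
    rw [Finset.mem_filter, Finset.mem_range] at hb
    obtain ⟨hb1, hb2⟩ := hb
    refine ⟨Nat.nth (pp D) b, ?_, Nat.count_nth_of_infinite hinf b⟩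
    rw [Finset.mem_filter, Finset.mem_Ico]
    have hpn := Nat.nth_mem_of_infinite hinf b
    refine ⟨⟨hpn.1, ?_⟩, ?_⟩
    · have hlt : Nat.nth (pp D) b < Nat.nth (pp D) (Nat.count (pp D) i) :=
        (Nat.nth_lt_nth hinf).mpr hb1
      rwa [Nat.nth_count hpi] at hlt
    · intro hc
      apply hb2
      rw [Finset.mem_image]
      exact ⟨Nat.nth (pp D) b, Finset.mem_sdiff.mpr ⟨hc, hpn.2⟩,
        Nat.count_nth_of_infinite hinf b⟩

lemma hVec_transfer (D I : Finset ℕ) (hDI : D ⊆ I) (hpos : ∀ i ∈ I, 0 < i) :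
    hVec D I = hZ ((I \ D).image (Nat.count (pp D))) := by
  classical
  funext r
  by_cases hr0 : r = 0
  · simp [hVec, hZ, hr0]
  · simp only [hVec, hZ, if_neg hr0]
    apply Finset.card_bij (fun i _ => Nat.count (pp D) i)
    · intro a ha
      rw [Finset.mem_filter] at ha
      rw [Finset.mem_filter]
      refine ⟨Finset.mem_image_of_mem _ ha.1, ?_⟩
      rw [← rVal_transfer D I hDI hpos ha.1]
      exact ha.2
    · intro a ha b hb hab
      rw [Finset.mem_filter, Finset.mem_sdiff] at ha hb
      exact Nat.count_injective ⟨hpos a ha.1.1, ha.1.2⟩ ⟨hpos b hb.1.1, hb.1.2⟩ hab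
    · intro b hb
      rw [Finset.mem_filter] at hb
      obtain ⟨hb1, hb2⟩ := hb
      rw [Finset.mem_image] at hb1
      obtain ⟨x, hx, hcx⟩ := hb1
      refine ⟨x, Finset.mem_filter.mpr ⟨hx, ?_⟩, hcx⟩
      rw [rVal_transfer D I hDI hpos hx, hcx]
      exact hb2

lemma card_image_count (D I : Finset ℕ) (hDI : D ⊆ I) (hpos : ∀ i ∈ I, 0 < i) :
    ((I \ D).image (Nat.count (pp D))).card = (I \ D).card := by
  apply Finset.card_image_of_injOn
  intro a ha b hb hab
  rw [Finset.mem_coe, Finset.mem_sdiff] at ha hb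
  exact Nat.count_injective ⟨hpos a ha.1, ha.2⟩ ⟨hpos b hb.1, hb.2⟩ hab

lemma image_nth_image_count (D I : Finset ℕ) (hDI : D ⊆ I) (hpos : ∀ i ∈ I, 0 < i) :
    ((I \ D).image (Nat.count (pp D))).image (Nat.nth (pp D)) = I \ D := by
  rw [Finset.image_image]
  have h : ∀ x ∈ I \ D, (Nat.nth (pp D) ∘ Nat.count (pp D)) x = id x := by
    intro x hx
    rw [Finset.mem_sdiff] at hx
    exact Nat.nth_count ⟨hpos x hx.1, hx.2⟩
  rw [Finset.image_congr h, Finset.image_id]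

end Stmt10Aux

theorem stmt10 (k : ℕ) (hk : 1 ≤ k) (D : Finset ℕ) (hD : ∀ i ∈ D, 0 < i)
    (hDk : D.card ≤ k - 1) :
    Set.BijOn (hVec D)
      {I : Finset ℕ | D ⊆ I ∧ I.card = k - 1 ∧ ∀ i ∈ I, 0 < i}
      {h : ℕ → ℕ | h 0 = 0 ∧
        ∃ N : ℕ, (∀ r, N ≤ r → h r = 0) ∧ ∑ r ∈ Finset.range N, h r < k - D.card} := by
  classical
  open Stmt10Aux in
  refine ⟨?_, ?_, ?_⟩
  · -- MapsTo
    rintro I ⟨hDI, hcard, hpos⟩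
    refine ⟨by simp [hVec], I.sup id + 1, ?_, ?_⟩
    · intro r hr
      simp only [hVec]
      rw [if_neg (by omega), Finset.card_eq_zero, Finset.filter_eq_empty_iff]
      intro i hi
      rw [Finset.mem_sdiff] at hi
      have h1 : rVal I i ≤ i - 1 := by
        have h := Finset.card_filter_le (Finset.Ico 1 i) (fun j => j ∉ I)
        rwa [Nat.card_Ico] at h
      have h2 : i ≤ I.sup id := Finset.le_sup (f := id) hi.1
      omega
    · have hfib : (I \ D).card
          = ∑ r ∈ Finset.range (I.sup id + 1), ((I \ D).filter fun i => rVal I i = r).card := by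
        apply Finset.card_eq_sum_card_fiberwise
        intro i hi
        rw [Finset.mem_coe, Finset.mem_sdiff] at hi
        rw [Finset.mem_coe, Finset.mem_range]
        have h1 : rVal I i ≤ i - 1 := by
          have h := Finset.card_filter_le (Finset.Ico 1 i) (fun j => j ∉ I)
          rwa [Nat.card_Ico] at h
        have h2 : i ≤ I.sup id := Finset.le_sup (f := id) hi.1
        omega
      have hle : ∑ r ∈ Finset.range (I.sup id + 1), hVec D I r
          ≤ ∑ r ∈ Finset.range (I.sup id + 1), ((I \ D).filter fun i => rVal I i = r).card := by
        apply Finset.sum_le_sum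
        intro r _
        simp only [hVec]
        split_ifs
        · exact Nat.zero_le _
        · exact le_refl _
      have hsd : (I \ D).card = I.card - D.card := Finset.card_sdiff_of_subset hDI
      omega
  · -- InjOn
    rintro I ⟨hDI, hIcard, hIpos⟩ J ⟨hDJ, hJcard, hJpos⟩ hij
    have hI' := hVec_transfer D I hDI hIpos
    have hJ' := hVec_transfer D J hDJ hJpos
    have hZeq : hZ ((I \ D).image (Nat.count (pp D)))
        = hZ ((J \ D).image (Nat.count (pp D))) := by
      rw [← hI', ← hJ', hij]
    have hc1 : ((I \ D).image (Nat.count (pp D))).card = k - 1 - D.card := by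
      rw [card_image_count D I hDI hIpos, Finset.card_sdiff_of_subset hDI, hIcard]
    have hc2 : ((J \ D).image (Nat.count (pp D))).card = k - 1 - D.card := by
      rw [card_image_count D J hDJ hJpos, Finset.card_sdiff_of_subset hDJ, hJcard]
    have heq := inj0 (k - 1 - D.card) _ _ hc1 hc2 hZeq
    have h2 : I \ D = J \ D := by
      rw [← image_nth_image_count D I hDI hIpos, heq, image_nth_image_count D J hDJ hJpos]
    calc I = D ∪ I \ D := (Finset.union_sdiff_of_subset hDI).symm
      _ = D ∪ J \ D := by rw [h2]
      _ = J := Finset.union_sdiff_of_subset hDJ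
  · -- SurjOn
    rintro h ⟨h0, N, hN, hsum⟩
    obtain ⟨I₀, hI₀c, hI₀⟩ := surj0 (k - 1 - D.card) h N h0 hN (by omega)
    set I := D ∪ I₀.image (Nat.nth (pp D)) with hIdef
    have hdisj : Disjoint D (I₀.image (Nat.nth (pp D))) := by
      rw [Finset.disjoint_right]
      intro a ha
      rw [Finset.mem_image] at ha
      obtain ⟨x, _, hx⟩ := ha
      rw [← hx]
      exact (Nat.nth_mem_of_infinite (pp_infinite D) x).2
    have hpos : ∀ i ∈ I, 0 < i := by
      intro i hi
      rw [hIdef, Finset.mem_union] at hi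
      rcases hi with hi | hi
      · exact hD i hi
      · rw [Finset.mem_image] at hi
        obtain ⟨x, _, hx⟩ := hi
        rw [← hx]
        exact (Nat.nth_mem_of_infinite (pp_infinite D) x).1
    have hDI : D ⊆ I := Finset.subset_union_left
    have hIcard : I.card = k - 1 := by
      rw [hIdef, Finset.card_union_of_disjoint hdisj,
        Finset.card_image_of_injective _ (Nat.nth_injective (pp_infinite D)), hI₀c]
      omega
    have hsd : I \ D = I₀.image (Nat.nth (pp D)) := by
      rw [hIdef, Finset.union_sdiff_cancel_left hdisj]
    have him : (I \ D).image (Nat.count (pp D)) = I₀ := by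
      rw [hsd, Finset.image_image]
      have h' : ∀ x ∈ I₀, (Nat.count (pp D) ∘ Nat.nth (pp D)) x = id x := by
        intro x _
        exact Nat.count_nth_of_infinite (pp_infinite D) x
      rw [Finset.image_congr h', Finset.image_id]
    refine ⟨I, ⟨hDI, hIcard, hpos⟩, ?_⟩
    rw [hVec_transfer D I hDI hpos, him, hI₀]
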